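/- Let A_n = sum over all quintuples (i,j,k,l,m) of natural numbers with i+j+k+l+m = n of (n!/(i!·j!·k!·l!·m!))^2. Then, with the convention A_m = 0 for m < 0, for every integer n ≥ 1 one has n^4·A_n = (35(n−1)^4+70(n−1)^3+63(n−1)^2+28(n−1)+5)·A_{n−1} − (n−1)^2(259n^2−518n+285)·A_{n−2} + 225(n−1)^2(n−2)^2·A_{n−3}. (Equivalently, Σ A_n z^n is the analytic solution of θ^4 − z(35θ^4+70θ^3+63θ^2+28θ+5) + z^2(θ+1)^2(259θ^2+518θ+285) − 225z^3(θ+1)^2(θ+2)^2, case #34 of the table.) -/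

import Mathlib

open PowerSeries Finset

noncomputable def cc (n : ℕ) : ℚ := 1 / (n.factorial : ℚ)^2

noncomputable def gg : ℚ⟦X⟧ := PowerSeries.mk cc

noncomputable def th (f : ℚ⟦X⟧) : ℚ⟦X⟧ := X * d⁄dX ℚ f

lemma coeff_th (n : ℕ) (f : ℚ⟦X⟧) : coeff n (th f) = n * coeff n f := by
  cases n with
  | zero => simp [th, coeff_zero_X_mul]
  | succ m => rw [th, coeff_succ_X_mul, coeff_derivative]; push_cast; ring

lemma th_mul (f h : ℚ⟦X⟧) : th (f * h) = th f * h + f * th h := by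
  simp only [th, Derivation.leibniz, smul_eq_mul]; ring

lemma th_add (f h : ℚ⟦X⟧) : th (f + h) = th f + th h := by
  simp only [th, map_add, mul_add]

lemma th_X : th (X : ℚ⟦X⟧) = X := by simp [th]

lemma th_ofNat (k : ℕ) [k.AtLeastTwo] : th (OfNat.ofNat k : ℚ⟦X⟧) = 0 := by
  rw [show (OfNat.ofNat k : ℚ⟦X⟧) = C (OfNat.ofNat k) from (map_ofNat (C) k).symm]
  simp [th]

noncomputable def tg : ℚ⟦X⟧ := th gg

lemma th_gg : th gg = tg := rfl

lemma th_tg : th tg = X * gg := by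
  ext n
  rw [coeff_th, tg, coeff_th]
  cases n with
  | zero => simp
  | succ m =>
    rw [coeff_succ_X_mul]
    simp only [gg, cc, coeff_mk, Nat.factorial_succ]
    push_cast
    have h1 : ((m:ℚ) + 1) ≠ 0 := by positivity
    have h2 : ((m.factorial:ℚ)) ≠ 0 := by positivity
    field_simp

set_option maxHeartbeats 2000000 in
lemma key :
    th (th (th (th (th (th (gg^5)))))) - 35 * th (th (th (th (X * gg^5))))
      + 70 * th (th (th (X * gg^5))) - 63 * th (th (X * gg^5)) + 28 * th (X * gg^5)
      - 5 * (X * gg^5)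
      + 259 * th (th (X * (X * gg^5))) - 518 * th (X * (X * gg^5)) + 285 * (X * (X * gg^5))
      - 225 * (X * (X * (X * gg^5))) = 0 := by
  simp only [pow_succ, pow_zero, one_mul, th_mul, th_add, th_X, th_gg, th_tg]
  ring


-- Q_k r = coeff r (gg^k)
noncomputable def Q2 (r : ℕ) : ℚ := ∑ p ∈ Finset.HasAntidiagonal.antidiagonal r, cc p.1 * cc p.2
noncomputable def Q3 (r : ℕ) : ℚ := ∑ p ∈ Finset.HasAntidiagonal.antidiagonal r, cc p.1 * Q2 p.2
noncomputable def Q4 (r : ℕ) : ℚ := ∑ p ∈ Finset.HasAntidiagonal.antidiagonal r, cc p.1 * Q3 p.2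
noncomputable def Q5 (r : ℕ) : ℚ := ∑ p ∈ Finset.HasAntidiagonal.antidiagonal r, cc p.1 * Q4 p.2

lemma coeff_gg (n : ℕ) : coeff n gg = cc n := coeff_mk n cc

lemma coeff_gg5 (n : ℕ) : coeff n (gg^5) = Q5 n := by
  have h2 : ∀ r, coeff r (gg^2) = Q2 r := by
    intro r
    rw [pow_two, coeff_mul, Q2]
    exact Finset.sum_congr rfl fun p _ => by rw [coeff_gg, coeff_gg]
  have h3 : ∀ r, coeff r (gg^3) = Q3 r := by
    intro r
    rw [pow_succ' gg 2, coeff_mul, Q3]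
    exact Finset.sum_congr rfl fun p _ => by rw [coeff_gg, h2]
  have h4 : ∀ r, coeff r (gg^4) = Q4 r := by
    intro r
    rw [pow_succ' gg 3, coeff_mul, Q4]
    exact Finset.sum_congr rfl fun p _ => by rw [coeff_gg, h3]
  rw [pow_succ' gg 4, coeff_mul, Q5]
  exact Finset.sum_congr rfl fun p _ => by rw [coeff_gg, h4]

-- s-lemmas
lemma s2 (r N : ℕ) (hr : r < N) :
    (∑ l ∈ range N, ∑ m ∈ range N, if l + m = r then cc l * cc m else 0) = Q2 r := by
  rw [Q2, Finset.Nat.sum_antidiagonal_eq_sum_range_succ_mk]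
  rw [← Finset.sum_subset (Finset.range_subset_range.2 hr) (fun l _ hl => ?_)]
  · refine Finset.sum_congr rfl fun l hl => ?_
    have hl' : l ≤ r := by simpa [Nat.lt_succ_iff] using hl
    rw [Finset.sum_eq_single (r - l)]
    · rw [if_pos (by omega)]
    · intro m _ hm; rw [if_neg (by omega)]
    · intro hm; exact absurd (Finset.mem_range.2 (by omega)) hm
  · refine Finset.sum_eq_zero fun m _ => ?_
    have : ¬ l ≤ r := fun h => hl (Finset.mem_range.2 (by omega))
    rw [if_neg (by omega)]

lemma s3 (r N : ℕ) (hr : r < N) :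
    (∑ k ∈ range N, ∑ l ∈ range N, ∑ m ∈ range N,
      if k + l + m = r then cc k * cc l * cc m else 0) = Q3 r := by
  rw [Q3, Finset.Nat.sum_antidiagonal_eq_sum_range_succ_mk]
  rw [← Finset.sum_subset (Finset.range_subset_range.2 hr) (fun k _ hk => ?_)]
  · refine Finset.sum_congr rfl fun k hk => ?_
    have hk' : k ≤ r := by simpa [Nat.lt_succ_iff] using hk
    rw [← s2 (r - k) N (by omega), Finset.mul_sum]
    refine Finset.sum_congr rfl fun l _ => ?_
    rw [Finset.mul_sum]
    refine Finset.sum_congr rfl fun m _ => ?_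
    rw [mul_ite, mul_zero]
    exact if_congr (by omega) (by ring) rfl
  · have hk' : ¬ k ≤ r := fun h => hk (Finset.mem_range.2 (by omega))
    refine Finset.sum_eq_zero fun l _ => Finset.sum_eq_zero fun m _ => ?_
    rw [if_neg (by omega)]

lemma s4 (r N : ℕ) (hr : r < N) :
    (∑ j ∈ range N, ∑ k ∈ range N, ∑ l ∈ range N, ∑ m ∈ range N,
      if j + k + l + m = r then cc j * cc k * cc l * cc m else 0) = Q4 r := by
  rw [Q4, Finset.Nat.sum_antidiagonal_eq_sum_range_succ_mk]
  rw [← Finset.sum_subset (Finset.range_subset_range.2 hr) (fun j _ hj => ?_)]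
  · refine Finset.sum_congr rfl fun j hj => ?_
    have hj' : j ≤ r := by simpa [Nat.lt_succ_iff] using hj
    rw [← s3 (r - j) N (by omega), Finset.mul_sum]
    refine Finset.sum_congr rfl fun k _ => ?_
    rw [Finset.mul_sum]
    refine Finset.sum_congr rfl fun l _ => ?_
    rw [Finset.mul_sum]
    refine Finset.sum_congr rfl fun m _ => ?_
    rw [mul_ite, mul_zero]
    exact if_congr (by omega) (by ring) rfl
  · have hj' : ¬ j ≤ r := fun h => hj (Finset.mem_range.2 (by omega))
    refine Finset.sum_eq_zero fun k _ => Finset.sum_eq_zero fun l _ =>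
      Finset.sum_eq_zero fun m _ => ?_
    rw [if_neg (by omega)]

lemma s5 (r N : ℕ) (hr : r < N) :
    (∑ i ∈ range N, ∑ j ∈ range N, ∑ k ∈ range N, ∑ l ∈ range N, ∑ m ∈ range N,
      if i + j + k + l + m = r then cc i * cc j * cc k * cc l * cc m else 0) = Q5 r := by
  rw [Q5, Finset.Nat.sum_antidiagonal_eq_sum_range_succ_mk]
  rw [← Finset.sum_subset (Finset.range_subset_range.2 hr) (fun i _ hi => ?_)]
  · refine Finset.sum_congr rfl fun i hi => ?_
    have hi' : i ≤ r := by simpa [Nat.lt_succ_iff] using hi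
    rw [← s4 (r - i) N (by omega), Finset.mul_sum]
    refine Finset.sum_congr rfl fun j _ => ?_
    rw [Finset.mul_sum]
    refine Finset.sum_congr rfl fun k _ => ?_
    rw [Finset.mul_sum]
    refine Finset.sum_congr rfl fun l _ => ?_
    rw [Finset.mul_sum]
    refine Finset.sum_congr rfl fun m _ => ?_
    rw [mul_ite, mul_zero]
    exact if_congr (by omega) (by ring) rfl
  · have hi' : ¬ i ≤ r := fun h => hi (Finset.mem_range.2 (by omega))
    refine Finset.sum_eq_zero fun j _ => Finset.sum_eq_zero fun k _ =>
      Finset.sum_eq_zero fun l _ => Finset.sum_eq_zero fun m _ => ?_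
    rw [if_neg (by omega)]

lemma fact_dvd_of_sum (i j k l m n : ℕ) (h : i + j + k + l + m = n) :
    (Nat.factorial i * Nat.factorial j * Nat.factorial k * Nat.factorial l * Nat.factorial m)
      ∣ Nat.factorial n := by
  subst h
  calc Nat.factorial i * Nat.factorial j * Nat.factorial k * Nat.factorial l * Nat.factorial m
      ∣ Nat.factorial (i+j) * Nat.factorial k * Nat.factorial l * Nat.factorial m := by
        exact mul_dvd_mul (mul_dvd_mul (mul_dvd_mul
          (Nat.factorial_mul_factorial_dvd_factorial_add i j) dvd_rfl) dvd_rfl) dvd_rfl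
    _ ∣ Nat.factorial (i+j+k) * Nat.factorial l * Nat.factorial m := by
        exact mul_dvd_mul (mul_dvd_mul
          (Nat.factorial_mul_factorial_dvd_factorial_add (i+j) k) dvd_rfl) dvd_rfl
    _ ∣ Nat.factorial (i+j+k+l) * Nat.factorial m := by
        exact mul_dvd_mul (Nat.factorial_mul_factorial_dvd_factorial_add (i+j+k) l) dvd_rfl
    _ ∣ Nat.factorial (i+j+k+l+m) := Nat.factorial_mul_factorial_dvd_factorial_add _ m

lemma cast_A (n : ℕ) :
    ((∑ i ∈ Finset.range (n + 1), ∑ j ∈ Finset.range (n + 1), ∑ k ∈ Finset.range (n + 1),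
        ∑ l ∈ Finset.range (n + 1), ∑ m ∈ Finset.range (n + 1),
          if i + j + k + l + m = n then
            ((Nat.factorial n /
              (Nat.factorial i * Nat.factorial j * Nat.factorial k * Nat.factorial l *
                Nat.factorial m) : ℕ) : ℤ) ^ 2
          else 0 : ℤ) : ℚ)
      = (n.factorial : ℚ)^2 * coeff n (gg^5) := by
  rw [coeff_gg5, ← s5 n (n+1) (Nat.lt_succ_self n)]
  simp only [Int.cast_sum]
  rw [Finset.mul_sum]
  refine Finset.sum_congr rfl fun i _ => ?_
  rw [Finset.mul_sum]
  refine Finset.sum_congr rfl fun j _ => ?_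
  rw [Finset.mul_sum]
  refine Finset.sum_congr rfl fun k _ => ?_
  rw [Finset.mul_sum]
  refine Finset.sum_congr rfl fun l _ => ?_
  rw [Finset.mul_sum]
  refine Finset.sum_congr rfl fun m _ => ?_
  rw [mul_ite, mul_zero]
  rw [show ((if i + j + k + l + m = n then
            ((Nat.factorial n /
              (Nat.factorial i * Nat.factorial j * Nat.factorial k * Nat.factorial l *
                Nat.factorial m) : ℕ) : ℤ) ^ 2 else 0 : ℤ) : ℚ) =
      (if i + j + k + l + m = n then
            ((Nat.factorial n /
              (Nat.factorial i * Nat.factorial j * Nat.factorial k * Nat.factorial l *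
                Nat.factorial m) : ℕ) : ℚ) ^ 2 else 0) from by split_ifs <;> push_cast <;> rfl]
  split_ifs with h
  · have hd := fact_dvd_of_sum i j k l m n h
    have hne : ((Nat.factorial i * Nat.factorial j * Nat.factorial k * Nat.factorial l *
        Nat.factorial m : ℕ) : ℚ) ≠ 0 := by positivity
    rw [Nat.cast_div hd hne, div_pow]
    simp only [cc]
    push_cast
    field_simp
  · rfl

noncomputable def bb (n : ℕ) : ℚ := coeff n (gg^5)

lemma bb_eq (k : ℕ) : coeff k (gg^5) = bb k := rfl

lemma cX1 (n : ℕ) : coeff (n+3) (X * gg^5) = bb (n+2) := by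
  rw [show n+3 = (n+2)+1 from rfl, coeff_succ_X_mul, bb_eq]

lemma cX2 (n : ℕ) : coeff (n+3) (X * (X * gg^5)) = bb (n+1) := by
  rw [show n+3 = (n+2)+1 from rfl, coeff_succ_X_mul,
    show n+2 = (n+1)+1 from rfl, coeff_succ_X_mul, bb_eq]

lemma cX3 (n : ℕ) : coeff (n+3) (X * (X * (X * gg^5))) = bb n := by
  rw [show n+3 = (n+2)+1 from rfl, coeff_succ_X_mul,
    show n+2 = (n+1)+1 from rfl, coeff_succ_X_mul,
    show n+1 = n+1 from rfl, coeff_succ_X_mul, bb_eq]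

lemma c1X1 : coeff 1 (X * gg^5) = bb 0 := by
  rw [show (1:ℕ) = 0+1 from rfl, coeff_succ_X_mul, bb_eq]

lemma c1X2 : coeff 1 (X * (X * gg^5)) = 0 := by
  rw [show (1:ℕ) = 0+1 from rfl, coeff_succ_X_mul, coeff_zero_X_mul]

lemma c1X3 : coeff 1 (X * (X * (X * gg^5))) = 0 := by
  rw [show (1:ℕ) = 0+1 from rfl, coeff_succ_X_mul, coeff_zero_X_mul]

lemma c2X1 : coeff 2 (X * gg^5) = bb 1 := by
  rw [show (2:ℕ) = 1+1 from rfl, coeff_succ_X_mul, bb_eq]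

lemma c2X2 : coeff 2 (X * (X * gg^5)) = bb 0 := by
  rw [show (2:ℕ) = 1+1 from rfl, coeff_succ_X_mul, c1X1]

lemma c2X3 : coeff 2 (X * (X * (X * gg^5))) = 0 := by
  rw [show (2:ℕ) = 1+1 from rfl, coeff_succ_X_mul, c1X2]

lemma keyrec (n : ℕ) :
    ((n:ℚ)+3)^6 * bb (n+3) =
      (35*((n:ℚ)+3)^4 - 70*((n:ℚ)+3)^3 + 63*((n:ℚ)+3)^2 - 28*((n:ℚ)+3) + 5) * bb (n+2)
      - (259*((n:ℚ)+3)^2 - 518*((n:ℚ)+3) + 285) * bb (n+1) + 225 * bb n := by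
  have h := congrArg (coeff (n+3)) key
  simp only [map_sub, map_add, map_zero, ← map_ofNat (C), coeff_C_mul, coeff_th,
    cX1, cX2, cX3, bb_eq] at h
  push_cast at h
  linear_combination h

lemma keyrec1 : bb 1 = 5 * bb 0 := by
  have h := congrArg (coeff 1) key
  simp only [map_sub, map_add, map_zero, ← map_ofNat (C), coeff_C_mul, coeff_th,
    c1X1, c1X2, c1X3, bb_eq] at h
  push_cast at h
  linear_combination h

lemma keyrec2 : 64 * bb 2 = 201 * bb 1 - 285 * bb 0 := by
  have h := congrArg (coeff 2) key
  simp only [map_sub, map_add, map_zero, ← map_ofNat (C), coeff_C_mul, coeff_th,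
    c2X1, c2X2, c2X3, bb_eq] at h
  push_cast at h
  linear_combination h

theorem stmt_12
    (A : ℤ → ℤ)
    (hneg : ∀ m : ℤ, m < 0 → A m = 0)
    (hA : ∀ n : ℕ, A (n : ℤ) =
      ∑ i ∈ Finset.range (n + 1), ∑ j ∈ Finset.range (n + 1), ∑ k ∈ Finset.range (n + 1),
        ∑ l ∈ Finset.range (n + 1), ∑ m ∈ Finset.range (n + 1),
          if i + j + k + l + m = n then
            ((Nat.factorial n /
              (Nat.factorial i * Nat.factorial j * Nat.factorial k * Nat.factorial l *
                Nat.factorial m) : ℕ) : ℤ) ^ 2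
          else 0) :
    ∀ n : ℤ, 1 ≤ n →
      n ^ 4 * A n =
        (35 * (n - 1) ^ 4 + 70 * (n - 1) ^ 3 + 63 * (n - 1) ^ 2 + 28 * (n - 1) + 5) * A (n - 1) -
          (n - 1) ^ 2 * (259 * n ^ 2 - 518 * n + 285) * A (n - 2) +
          225 * (n - 1) ^ 2 * (n - 2) ^ 2 * A (n - 3) := by
  have hAv : ∀ k : ℕ, ((A k : ℤ) : ℚ) = (k.factorial : ℚ)^2 * bb k := by
    intro k
    rw [hA k]
    exact (cast_A k).trans (by rw [bb_eq])
  have inj : ∀ a b : ℤ, (a : ℚ) = (b : ℚ) → a = b := fun a b h => by exact_mod_cast h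
  intro n hn
  lift n to ℕ using (by linarith) with m
  have hm : 1 ≤ m := by exact_mod_cast hn
  match m, hm with
  | 1, _ =>
    apply inj
    rw [show ((1:ℕ):ℤ) - 1 = ((0:ℕ):ℤ) from rfl, show ((1:ℕ):ℤ) - 2 = (-1:ℤ) from rfl,
      show ((1:ℕ):ℤ) - 3 = (-2:ℤ) from rfl, hneg (-1) (by norm_num), hneg (-2) (by norm_num)]
    have e1 := hAv 1; have e0 := hAv 0
    push_cast at e1 e0 ⊢
    rw [e1, e0]
    norm_num [Nat.factorial]
    linear_combination keyrec1
  | 2, _ =>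
    apply inj
    rw [show ((2:ℕ):ℤ) - 1 = ((1:ℕ):ℤ) from rfl, show ((2:ℕ):ℤ) - 2 = ((0:ℕ):ℤ) from rfl,
      show ((2:ℕ):ℤ) - 3 = (-1:ℤ) from rfl, hneg (-1) (by norm_num)]
    have e2 := hAv 2; have e1 := hAv 1; have e0 := hAv 0
    push_cast at e2 e1 e0 ⊢
    rw [e2, e1, e0]
    norm_num [Nat.factorial]
    linear_combination keyrec2
  | (m+3), _ =>
    apply inj
    rw [show ((m+3:ℕ):ℤ) - 1 = ((m+2:ℕ):ℤ) by push_cast; ring,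
      show ((m+3:ℕ):ℤ) - 2 = ((m+1:ℕ):ℤ) by push_cast; ring,
      show ((m+3:ℕ):ℤ) - 3 = ((m:ℕ):ℤ) by push_cast; ring]
    have e3 := hAv (m+3); have e2 := hAv (m+2); have e1 := hAv (m+1); have e0 := hAv m
    push_cast at e3 e2 e1 e0 ⊢
    rw [e3, e2, e1, e0]
    rw [show ((m+3).factorial : ℚ) = ((m:ℚ)+3)*(((m:ℚ)+2)*(((m:ℚ)+1)*(m.factorial:ℚ)))
        by rw [Nat.factorial_succ, Nat.factorial_succ, Nat.factorial_succ]; push_cast; ring,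
      show ((m+2).factorial : ℚ) = ((m:ℚ)+2)*(((m:ℚ)+1)*(m.factorial:ℚ))
        by rw [Nat.factorial_succ, Nat.factorial_succ]; push_cast; ring,
      show ((m+1).factorial : ℚ) = ((m:ℚ)+1)*(m.factorial:ℚ)
        by rw [Nat.factorial_succ]; push_cast; ring]
    linear_combination (((m:ℚ)+2)*((m:ℚ)+1)*(m.factorial:ℚ))^2 * keyrec m
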